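/- The function φ defined on [0,1/2] by φ(q) = h((1 + √(1 − 4q²))/2) is strictly increasing on [0,1/2] and strictly convex on [0,1/2]. -/

import Mathlib

open Real Set

/-- The base-2 binary entropy function, with the convention `0 * log 0 = 0`. -/
noncomputable def binEnt (x : ℝ) : ℝ :=
  -(x * Real.logb 2 x) - (1 - x) * Real.logb 2 (1 - x)

lemma binEnt_eq :
    binEnt = fun x => (-(x * Real.log x) - (1 - x) * Real.log (1 - x)) / Real.log 2 := by
  funext x
  unfold binEnt Real.logb
  ring

lemma continuous_binEnt : Continuous binEnt := by
  rw [binEnt_eq]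
  apply Continuous.div_const
  exact Real.continuous_mul_log.neg.sub
    (Real.continuous_mul_log.comp (continuous_const.sub continuous_id))

/-- artanh-type inequality: `2s < log(1+s) - log(1-s)` for `s ∈ (0,1)`. -/
lemma artanh_gt {s : ℝ} (h0 : 0 < s) (h1 : s < 1) :
    2 * s < Real.log (1 + s) - Real.log (1 - s) := by
  set A : ℝ → ℝ := fun t => Real.log (1 + t) - Real.log (1 - t) - 2 * t with hA
  have hD : ∀ t ∈ Ico (0:ℝ) 1, HasDerivAt A (1 / (1 + t) + 1 / (1 - t) - 2) t := by
    intro t ht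
    have h1t : (1:ℝ) + t ≠ 0 := by nlinarith [ht.1]
    have h2t : (1:ℝ) - t ≠ 0 := by nlinarith [ht.2]
    have d1 : HasDerivAt (fun t : ℝ => Real.log (1 + t)) (1 / (1 + t)) t := by
      have := (((hasDerivAt_id t).const_add 1).log h1t)
      simpa using this
    have d2 : HasDerivAt (fun t : ℝ => Real.log (1 - t)) ((-1) / (1 - t)) t := by
      have := (((hasDerivAt_id t).const_sub 1).log h2t)
      simpa using this
    have d3 : HasDerivAt (fun t : ℝ => 2 * t) 2 t := by
      simpa using (hasDerivAt_id t).const_mul 2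
    have := (d1.sub d2).sub d3
    refine this.congr_deriv ?_
    ring
  have key : StrictMonoOn A (Ico (0:ℝ) 1) := by
    apply strictMonoOn_of_deriv_pos (convex_Ico 0 1)
    · intro t ht
      exact ((hD t ht).differentiableAt).continuousAt.continuousWithinAt
    · intro t ht
      rw [interior_Ico] at ht
      rw [(hD t (Ioo_subset_Ico_self ht)).deriv]
      have h1t : (0:ℝ) < 1 + t := by linarith [ht.1]
      have h2t : (0:ℝ) < 1 - t := by linarith [ht.2]
      have : 1 / (1 + t) + 1 / (1 - t) - 2 = 2 * t ^ 2 / ((1 + t) * (1 - t)) := by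
        field_simp; ring
      rw [this]
      apply div_pos <;> nlinarith [ht.1, ht.2]
  have h00 : A 0 = 0 := by simp [hA]
  have := key (left_mem_Ico.2 one_pos) ⟨h0.le, h1⟩ h0
  rw [h00] at this
  simp only [hA] at this
  linarith

/-- The auxiliary function ψ. -/
noncomputable def psiAux (s : ℝ) : ℝ :=
  (Real.log (1 + s) - Real.log (1 - s)) * (Real.sqrt (1 - s ^ 2) / s)

lemma psiAux_hasDeriv {s : ℝ} (h0 : 0 < s) (h1 : s < 1) :
    HasDerivAt psiAux ((2 * s - (Real.log (1 + s) - Real.log (1 - s))) /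
      (Real.sqrt (1 - s ^ 2) * s ^ 2)) s := by
  have hs2 : (0:ℝ) < 1 - s ^ 2 := by nlinarith
  set r := Real.sqrt (1 - s ^ 2) with hrdef
  have hr2 : r ^ 2 = 1 - s ^ 2 := Real.sq_sqrt hs2.le
  have hrpos : 0 < r := Real.sqrt_pos.2 hs2
  have h1t : (1:ℝ) + s ≠ 0 := by linarith
  have h2t : (1:ℝ) - s ≠ 0 := by linarith
  have d1 : HasDerivAt (fun t : ℝ => Real.log (1 + t) - Real.log (1 - t))
      (1 / (1 + s) - (-1) / (1 - s)) s := by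
    have a1 : HasDerivAt (fun t : ℝ => Real.log (1 + t)) (1 / (1 + s)) s := by
      simpa using (((hasDerivAt_id s).const_add 1).log h1t)
    have a2 : HasDerivAt (fun t : ℝ => Real.log (1 - t)) ((-1) / (1 - s)) s := by
      simpa using (((hasDerivAt_id s).const_sub 1).log h2t)
    exact a1.sub a2
  have dsq : HasDerivAt (fun t : ℝ => Real.sqrt (1 - t ^ 2)) (-s / r) s := by
    have inner : HasDerivAt (fun t : ℝ => 1 - t ^ 2) (-(2 * s)) s := by
      simpa using ((hasDerivAt_pow 2 s).const_sub 1)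
    have := (Real.hasDerivAt_sqrt (x := 1 - s ^ 2) (by positivity)).comp s inner
    refine this.congr_deriv ?_
    rw [← hrdef]
    field_simp
  have d2 : HasDerivAt (fun t : ℝ => Real.sqrt (1 - t ^ 2) / t)
      ((-s / r * s - r * 1) / s ^ 2) s := dsq.div (hasDerivAt_id s) h0.ne'
  have := d1.mul d2
  refine this.congr_deriv ?_
  rw [← hrdef]
  have e1 : 1 / (1 + s) - (-1) / (1 - s) = 2 / r ^ 2 := by
    rw [hr2]; field_simp; ring
  have e2 : (-s / r * s - r * 1) / s ^ 2 = -(1 / (r * s ^ 2)) := by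
    rw [div_eq_iff (by positivity : (s:ℝ) ^ 2 ≠ 0)]
    field_simp
    linear_combination (-1) * hr2
  rw [e1, e2]
  field_simp
  ring

lemma psiAux_anti : StrictAntiOn psiAux (Ioo (0:ℝ) 1) := by
  apply strictAntiOn_of_deriv_neg (convex_Ioo 0 1)
  · intro s hs
    exact (psiAux_hasDeriv hs.1 hs.2).differentiableAt.continuousAt.continuousWithinAt
  · intro s hs
    rw [interior_Ioo] at hs
    rw [(psiAux_hasDeriv hs.1 hs.2).deriv]
    apply div_neg_of_neg_of_pos
    · linarith [artanh_gt hs.1 hs.2]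
    · have : (0:ℝ) < 1 - s ^ 2 := by nlinarith [hs.1, hs.2]
      exact mul_pos (Real.sqrt_pos.2 this) (pow_pos hs.1 2)

/-- The derivative of the main function. -/
noncomputable def Fq (q : ℝ) : ℝ :=
  (Real.log (1 + Real.sqrt (1 - 4 * q ^ 2)) - Real.log (1 - Real.sqrt (1 - 4 * q ^ 2))) *
    (2 * q / Real.sqrt (1 - 4 * q ^ 2)) / Real.log 2

lemma sqrt_mem {q : ℝ} (h0 : 0 < q) (h1 : q < 1/2) :
    Real.sqrt (1 - 4 * q ^ 2) ∈ Ioo (0:ℝ) 1 := by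
  have hq2 : (0:ℝ) < 1 - 4 * q ^ 2 := by nlinarith
  constructor
  · exact Real.sqrt_pos.2 hq2
  · have : Real.sqrt (1 - 4 * q ^ 2) < Real.sqrt 1 := Real.sqrt_lt_sqrt hq2.le (by nlinarith)
    rwa [Real.sqrt_one] at this

lemma main_hasDeriv {q : ℝ} (h0 : 0 < q) (h1 : q < 1/2) :
    HasDerivAt (fun q : ℝ => binEnt ((1 + Real.sqrt (1 - 4 * q ^ 2)) / 2)) (Fq q) q := by
  have hq2 : (0:ℝ) < 1 - 4 * q ^ 2 := by nlinarith
  set s := Real.sqrt (1 - 4 * q ^ 2) with hsdef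
  have hspos : 0 < s := (sqrt_mem h0 h1).1
  have hslt : s < 1 := (sqrt_mem h0 h1).2
  -- inner function derivative
  have i1 : HasDerivAt (fun q : ℝ => 1 - 4 * q ^ 2) (-(8 * q)) q := by
    have := ((hasDerivAt_pow 2 q).const_mul 4).const_sub 1
    refine this.congr_deriv ?_
    ring
  have i2 : HasDerivAt (fun q : ℝ => Real.sqrt (1 - 4 * q ^ 2)) (-(4 * q) / s) q := by
    have := (Real.hasDerivAt_sqrt (x := 1 - 4 * q ^ 2) hq2.ne').comp q i1
    have h2 : HasDerivAt (fun q : ℝ => Real.sqrt (1 - 4 * q ^ 2))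
        (1 / (2 * s) * -(8 * q)) q := this
    convert h2 using 1
    field_simp
    ring
  have i3 : HasDerivAt (fun q : ℝ => (1 + Real.sqrt (1 - 4 * q ^ 2)) / 2) (-(2 * q) / s) q := by
    have := (i2.const_add 1).div_const 2
    refine this.congr_deriv ?_
    field_simp
    ring
  -- outer function derivative
  set x := (1 + s) / 2 with hxdef
  have hx0 : x ≠ 0 := by
    have : 0 < x := by rw [hxdef]; linarith
    exact this.ne'
  have h1x : 1 - x = (1 - s) / 2 := by rw [hxdef]; ring
  have h1x0 : (1:ℝ) - x ≠ 0 := by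
    have : 0 < 1 - x := by rw [h1x]; linarith
    exact this.ne'
  have ox : HasDerivAt binEnt ((Real.log (1 - x) - Real.log x) / Real.log 2) x := by
    rw [binEnt_eq]
    have b1 : HasDerivAt (fun y : ℝ => y * Real.log y) (Real.log x + 1) x :=
      Real.hasDerivAt_mul_log hx0
    have b2 : HasDerivAt (fun y : ℝ => (1 - y) * Real.log (1 - y))
        ((Real.log (1 - x) + 1) * (-1)) x := by
      have := (Real.hasDerivAt_mul_log h1x0).comp x ((hasDerivAt_id x).const_sub 1)
      exact this
    have := (b1.neg.sub b2).div_const (Real.log 2)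
    refine this.congr_deriv ?_
    ring
  have comp := ox.comp q i3
  have final : HasDerivAt (fun q : ℝ => binEnt ((1 + Real.sqrt (1 - 4 * q ^ 2)) / 2))
      ((Real.log (1 - x) - Real.log x) / Real.log 2 * (-(2 * q) / s)) q := comp
  convert final using 1
  rw [h1x, hxdef, Real.log_div (by linarith) two_ne_zero,
    Real.log_div (by linarith) two_ne_zero]
  unfold Fq
  rw [← hsdef]
  field_simp
  ring

lemma Fq_pos {q : ℝ} (h0 : 0 < q) (h1 : q < 1/2) : 0 < Fq q := by
  obtain ⟨hspos, hslt⟩ := sqrt_mem h0 h1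
  apply div_pos
  · apply mul_pos
    · have : Real.log (1 - Real.sqrt (1 - 4 * q ^ 2)) <
          Real.log (1 + Real.sqrt (1 - 4 * q ^ 2)) :=
        Real.log_lt_log (by linarith) (by linarith)
      linarith
    · positivity
  · exact Real.log_pos one_lt_two

lemma Fq_eq_psi {q : ℝ} (h0 : 0 < q) (h1 : q < 1/2) :
    Fq q = psiAux (Real.sqrt (1 - 4 * q ^ 2)) / Real.log 2 := by
  have hq2 : (0:ℝ) < 1 - 4 * q ^ 2 := by nlinarith
  have hs2 : Real.sqrt (1 - 4 * q ^ 2) ^ 2 = 1 - 4 * q ^ 2 := Real.sq_sqrt hq2.le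
  unfold Fq psiAux
  rw [hs2, show (1:ℝ) - (1 - 4 * q ^ 2) = (2 * q) ^ 2 by ring,
    Real.sqrt_sq (by linarith)]

/-- The function `φ(q) = h((1 + √(1 − 4q²))/2)` is strictly increasing and strictly
convex on `[0, 1/2]`. -/
theorem stmt_7 :
    StrictMonoOn (fun q : ℝ => binEnt ((1 + Real.sqrt (1 - 4 * q ^ 2)) / 2))
      (Set.Icc (0 : ℝ) (1 / 2)) ∧
    StrictConvexOn ℝ (Set.Icc (0 : ℝ) (1 / 2))
      (fun q : ℝ => binEnt ((1 + Real.sqrt (1 - 4 * q ^ 2)) / 2)) := by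
  have contf : ContinuousOn (fun q : ℝ => binEnt ((1 + Real.sqrt (1 - 4 * q ^ 2)) / 2))
      (Set.Icc (0 : ℝ) (1 / 2)) := by
    apply Continuous.continuousOn
    apply continuous_binEnt.comp
    exact (continuous_const.add (Real.continuous_sqrt.comp (by continuity))).div_const 2
  have hderiv : ∀ q ∈ Ioo (0:ℝ) (1/2),
      deriv (fun q : ℝ => binEnt ((1 + Real.sqrt (1 - 4 * q ^ 2)) / 2)) q = Fq q :=
    fun q hq => (main_hasDeriv hq.1 hq.2).deriv
  constructor
  · apply strictMonoOn_of_deriv_pos (convex_Icc _ _) contf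
    intro q hq
    rw [interior_Icc] at hq
    rw [hderiv q hq]
    exact Fq_pos hq.1 hq.2
  · apply StrictMonoOn.strictConvexOn_of_deriv (convex_Icc _ _) contf
    rw [interior_Icc]
    intro a ha b hb hab
    rw [hderiv a ha, hderiv b hb, Fq_eq_psi ha.1 ha.2, Fq_eq_psi hb.1 hb.2]
    have hlt : Real.sqrt (1 - 4 * b ^ 2) < Real.sqrt (1 - 4 * a ^ 2) :=
      Real.sqrt_lt_sqrt (by nlinarith [hb.1, hb.2]) (by nlinarith [ha.1])
    have hpsi : psiAux (Real.sqrt (1 - 4 * a ^ 2)) < psiAux (Real.sqrt (1 - 4 * b ^ 2)) :=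
      psiAux_anti (sqrt_mem hb.1 hb.2) (sqrt_mem ha.1 ha.2) hlt
    have hlog : (0:ℝ) < Real.log 2 := Real.log_pos one_lt_two
    gcongr
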